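/- Let u : ℝ^d → ℝ be K-semi-concave and let η = (η₁, η₂) : [a,b] → ℝ^d × ℝ^d be a closed Lipschitz curve (η(a) = η(b)) drawn on the enlarged pseudograph E(u). Then ∫ₐᵇ ⟪η₂(τ), η₁'(τ)⟫ dτ = 0; i.e., the Liouville form integrates to zero over any closed Lipschitz loop on E(u). -/

import Mathlib

open scoped RealInnerProductSpace

def SuperDiff {d : ℕ} (K : ℝ) (u : EuclideanSpace ℝ (Fin d) → ℝ)
    (x p : EuclideanSpace ℝ (Fin d)) : Prop :=
  ∀ y, u y ≤ u x + ⟪p, y - x⟫ + K * ‖y - x‖ ^ 2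

open MeasureTheory Filter Topology

/-- If `|e x - e t| ≤ C (x-t)²` on `s`, then `e` has derivative `0` within `s` at `t`. -/
lemma hasDerivWithinAt_zero_of_sq_bound {e : ℝ → ℝ} {s : Set ℝ} {t : ℝ} {C : ℝ}
    (h : ∀ x ∈ s, |e x - e t| ≤ C * (x - t) ^ 2) :
    HasDerivWithinAt e 0 s t := by
  rw [hasDerivWithinAt_iff_tendsto_slope]
  apply squeeze_zero_norm' (a := fun x => |C| * |x - t|)
  · filter_upwards [self_mem_nhdsWithin] with x hx
    rcases hx with ⟨hxs, hxt⟩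
    have hxt' : x - t ≠ 0 := sub_ne_zero.2 (by simpa using hxt)
    have hpos : 0 < |x - t| := abs_pos.2 hxt'
    rw [slope_def_field, Real.norm_eq_abs, abs_div, div_le_iff₀ hpos]
    calc |e x - e t| ≤ C * (x - t) ^ 2 := h x hxs
      _ ≤ |C| * (x - t) ^ 2 := by
          have := le_abs_self C
          nlinarith [sq_nonneg (x - t)]
      _ = |C| * |x - t| * |x - t| := by rw [← abs_of_nonneg (sq_nonneg (x - t)), abs_pow]; ring
  · have hcont : Continuous (fun x : ℝ => |C| * |x - t|) := by fun_prop
    have : Filter.Tendsto (fun x : ℝ => |C| * |x - t|) (𝓝 t) (𝓝 0) := by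
      have := hcont.tendsto t
      simpa using this
    exact this.mono_left nhdsWithin_le_nhds

/-- FTC for Lipschitz functions with a.e. known derivative, via difference quotients and
dominated convergence. -/
lemma lipschitz_ftc {M : NNReal} {G : ℝ → ℝ} (hG : LipschitzWith M G)
    {a b : ℝ} (hab : a ≤ b) {φ : ℝ → ℝ}
    (hφ : ∀ᵐ t, t ∈ Set.Ioo a b → HasDerivAt G (φ t) t) :
    ∫ t in a..b, φ t = G b - G a := by
  have hGc : Continuous G := hG.continuous
  set h : ℕ → ℝ := fun n => 1 / (n + 1 : ℝ) with hh
  have hpos : ∀ n, 0 < h n := fun n => by positivity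
  have htend : Tendsto h atTop (𝓝 0) := tendsto_one_div_add_atTop_nhds_zero_nat
  set F : ℕ → ℝ → ℝ := fun n t => (G (t + h n) - G t) / h n with hF
  have hint : ∀ c d : ℝ, IntervalIntegrable G volume c d := fun c d =>
    hGc.intervalIntegrable c d
  -- sequences approaching a point from the right, within the punctured neighborhood
  have hseq : ∀ c : ℝ, Tendsto (fun n => c + h n) atTop (𝓝[≠] c) := by
    intro c
    apply tendsto_nhdsWithin_of_tendsto_nhds_of_eventually_within
    · simpa using tendsto_const_nhds.add htend
    · filter_upwards with n
      simp [Set.mem_compl_iff, (hpos n).ne']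
  -- the integral identity for difference quotients
  have key : ∀ n, (∫ t in a..b, F n t)
      = ((∫ t in b..(b + h n), G t) - ∫ t in a..(a + h n), G t) / h n := by
    intro n
    have h1 : (∫ t in a..b, (G (t + h n) - G t))
        = (∫ t in (a + h n)..(b + h n), G t) - ∫ t in a..b, G t := by
      have hi1 : IntervalIntegrable (fun t => G (t + h n)) volume a b :=
        (hGc.comp (continuous_add_right (h n))).intervalIntegrable a b
      rw [intervalIntegral.integral_sub hi1 (hint a b),
        intervalIntegral.integral_comp_add_right]
    have h2 : (∫ t in a..(a + h n), G t) + (∫ t in (a + h n)..(b + h n), G t)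
        = ∫ t in a..(b + h n), G t :=
      intervalIntegral.integral_add_adjacent_intervals (hint _ _) (hint _ _)
    have h3 : (∫ t in a..b, G t) + (∫ t in b..(b + h n), G t) = ∫ t in a..(b + h n), G t :=
      intervalIntegral.integral_add_adjacent_intervals (hint _ _) (hint _ _)
    have : (∫ t in a..b, F n t) = (∫ t in a..b, (G (t + h n) - G t)) / h n := by
      rw [hF]
      simp only [← intervalIntegral.integral_div]
    rw [this, h1]
    congr 1
    linarith
  -- right-hand side converges to G c for each endpoint
  have hright : ∀ c : ℝ, Tendsto (fun n => (∫ t in c..(c + h n), G t) / h n) atTop (𝓝 (G c)) := by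
    intro c
    have hd : HasDerivAt (fun x => ∫ t in c..x, G t) (G c) c :=
      intervalIntegral.integral_hasDerivAt_right (hint c c)
        (hGc.stronglyMeasurableAtFilter _ _) hGc.continuousAt
    have hs := hasDerivAt_iff_tendsto_slope.1 hd
    have := hs.comp (hseq c)
    simp only [Function.comp_def, slope_def_field, add_sub_cancel_left] at this
    simpa [intervalIntegral.integral_same] using this
  -- dominated convergence on Ioo a b
  have hmeas : ∀ n, AEStronglyMeasurable (F n) (volume.restrict (Set.Ioo a b)) := by
    intro n
    have hc : Continuous (F n) := by
      rw [hF]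
      fun_prop
    exact hc.aestronglyMeasurable.restrict
  have hbound : ∀ n, ∀ᵐ t ∂(volume.restrict (Set.Ioo a b)), ‖F n t‖ ≤ (M : ℝ) := by
    intro n
    filter_upwards with t
    have hd : |G (t + h n) - G t| ≤ (M : ℝ) * |h n| := by
      have := hG.dist_le_mul (t + h n) t
      simpa [Real.dist_eq, add_sub_cancel_left] using this
    rw [hF]
    simp only [Real.norm_eq_abs, abs_div]
    rw [div_le_iff₀ (abs_pos.2 (hpos n).ne')]
    exact hd
  have hbint : Integrable (fun _ : ℝ => (M : ℝ)) (volume.restrict (Set.Ioo a b)) := by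
    exact integrableOn_const measure_Ioo_lt_top.ne
  have hconv : ∀ᵐ t ∂(volume.restrict (Set.Ioo a b)),
      Tendsto (fun n => F n t) atTop (𝓝 (φ t)) := by
    refine (ae_restrict_iff' measurableSet_Ioo).2 (hφ.mono fun t ht hmem => ?_)
    have hd := ht hmem
    have hs := hasDerivAt_iff_tendsto_slope.1 hd
    have := hs.comp (hseq t)
    simpa [hF, Function.comp_def, slope_def_field, add_sub_cancel_left] using this
  have hDCT : Tendsto (fun n => ∫ t in Set.Ioo a b, F n t) atTop
      (𝓝 (∫ t in Set.Ioo a b, φ t)) :=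
    tendsto_integral_of_dominated_convergence _ hmeas hbint hbound hconv
  -- interval integrals equal Ioo integrals
  have hIoo : ∀ n, (∫ t in a..b, F n t) = ∫ t in Set.Ioo a b, F n t := by
    intro n
    rw [intervalIntegral.integral_of_le hab, integral_Ioc_eq_integral_Ioo]
  have hIooφ : (∫ t in a..b, φ t) = ∫ t in Set.Ioo a b, φ t := by
    rw [intervalIntegral.integral_of_le hab, integral_Ioc_eq_integral_Ioo]
  -- conclude by uniqueness of limits
  have hlim2 : Tendsto (fun n => ∫ t in Set.Ioo a b, F n t) atTop (𝓝 (G b - G a)) := by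
    have : Tendsto (fun n => (∫ t in b..(b + h n), G t) / h n
        - (∫ t in a..(a + h n), G t) / h n) atTop (𝓝 (G b - G a)) := (hright b).sub (hright a)
    apply this.congr
    intro n
    rw [← hIoo, key n, sub_div]
  rw [hIooφ]
  exact tendsto_nhds_unique hDCT hlim2

set_option maxHeartbeats 1000000 in
/-- the Liouville form integrates to zero over any closed Lipschitz loop drawn
on the enlarged pseudograph of a `K`-semi-concave function. -/
theorem stmt8 {d : ℕ} (K : ℝ) (hK : 0 ≤ K) (u : EuclideanSpace ℝ (Fin d) → ℝ)
    (hsc : ∀ x, ∃ p, SuperDiff K u x p)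
    (a b : ℝ) (hab : a ≤ b)
    (η₁ η₂ : ℝ → EuclideanSpace ℝ (Fin d)) (L : NNReal)
    (hη₁ : LipschitzOnWith L η₁ (Set.Icc a b)) (hη₂ : LipschitzOnWith L η₂ (Set.Icc a b))
    (hclosed₁ : η₁ a = η₁ b) (hclosed₂ : η₂ a = η₂ b)
    (hon : ∀ τ ∈ Set.Icc a b, SuperDiff K u (η₁ τ) (η₂ τ)) :
    ∫ τ in a..b, ⟪η₂ τ, derivWithin η₁ (Set.Icc a b) τ⟫ = 0 := by
  have hba : (0:ℝ) ≤ b - a := sub_nonneg.2 hab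
  set g : ℝ → ℝ := fun t => u (η₁ t) with hg
  have hdist1 : ∀ s ∈ Set.Icc a b, ∀ t ∈ Set.Icc a b, ‖η₁ s - η₁ t‖ ≤ (L : ℝ) * |s - t| := by
    intro s hs t ht
    have := (lipschitzOnWith_iff_dist_le_mul.1 hη₁) s hs t ht
    simpa [dist_eq_norm, Real.dist_eq] using this
  have hdist2 : ∀ s ∈ Set.Icc a b, ∀ t ∈ Set.Icc a b, ‖η₂ s - η₂ t‖ ≤ (L : ℝ) * |s - t| := by
    intro s hs t ht
    have := (lipschitzOnWith_iff_dist_le_mul.1 hη₂) s hs t ht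
    simpa [dist_eq_norm, Real.dist_eq] using this
  -- key second-order estimate
  have key : ∀ s ∈ Set.Icc a b, ∀ t ∈ Set.Icc a b,
      |g s - g t - ⟪η₂ t, η₁ s - η₁ t⟫| ≤ ((L : ℝ) ^ 2 + K * (L : ℝ) ^ 2) * (s - t) ^ 2 := by
    intro s hs t ht
    have h1 := hon t ht (η₁ s)
    have h2 := hon s hs (η₁ t)
    have hn1 : ‖η₁ s - η₁ t‖ ≤ (L : ℝ) * |s - t| := hdist1 s hs t ht
    have hn2 : ‖η₂ s - η₂ t‖ ≤ (L : ℝ) * |s - t| := hdist2 s hs t ht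
    have habs : |s - t| ^ 2 = (s - t) ^ 2 := sq_abs _
    have hsq : ‖η₁ s - η₁ t‖ ^ 2 ≤ (L : ℝ) ^ 2 * (s - t) ^ 2 := by
      have := pow_le_pow_left₀ (norm_nonneg _) hn1 2
      calc ‖η₁ s - η₁ t‖ ^ 2 ≤ ((L : ℝ) * |s - t|) ^ 2 := this
        _ = (L : ℝ) ^ 2 * (s - t) ^ 2 := by rw [mul_pow, habs]
    have hnorm_rev : ‖η₁ t - η₁ s‖ = ‖η₁ s - η₁ t‖ := norm_sub_rev _ _
    have inner_eq : ⟪η₂ s, η₁ t - η₁ s⟫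
        = -⟪η₂ t, η₁ s - η₁ t⟫ - ⟪η₂ s - η₂ t, η₁ s - η₁ t⟫ := by
      have hneg : η₁ t - η₁ s = -(η₁ s - η₁ t) := by abel
      rw [hneg, inner_neg_right, inner_sub_left]
      ring
    have CS : |⟪η₂ s - η₂ t, η₁ s - η₁ t⟫| ≤ ‖η₂ s - η₂ t‖ * ‖η₁ s - η₁ t‖ :=
      abs_real_inner_le_norm _ _
    have hprod : ‖η₂ s - η₂ t‖ * ‖η₁ s - η₁ t‖ ≤ (L : ℝ) ^ 2 * (s - t) ^ 2 := by
      have := mul_le_mul hn2 hn1 (norm_nonneg _) (by positivity)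
      calc ‖η₂ s - η₂ t‖ * ‖η₁ s - η₁ t‖ ≤ ((L : ℝ) * |s - t|) * ((L : ℝ) * |s - t|) := this
        _ = (L : ℝ) ^ 2 * (s - t) ^ 2 := by rw [← habs]; ring
    rw [abs_le]
    constructor
    · rw [inner_eq, hnorm_rev] at h2
      have hCS' := (abs_le.1 CS).1
      simp only [hg]
      nlinarith [mul_le_mul_of_nonneg_left hsq hK]
    · simp only [hg]
      nlinarith [mul_le_mul_of_nonneg_left hsq hK]
  -- Lipschitz bound for g on [a,b]
  have hR : ∀ t ∈ Set.Icc a b, ‖η₂ t‖ ≤ ‖η₂ a‖ + (L : ℝ) * (b - a) := by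
    intro t ht
    have h1 := hdist2 t ht a (Set.left_mem_Icc.2 hab)
    have h2 : |t - a| ≤ b - a := by
      rw [abs_le]; constructor <;> [linarith [ht.1, ht.2]; linarith [ht.1, ht.2]]
    have h3 : ‖η₂ t‖ ≤ ‖η₂ a‖ + ‖η₂ t - η₂ a‖ := by
      have := norm_add_le (η₂ a) (η₂ t - η₂ a)
      simpa using this
    have hL : (0:ℝ) ≤ L := L.2
    nlinarith
  set M₀ : ℝ := (‖η₂ a‖ + (L : ℝ) * (b - a)) * L + ((L : ℝ) ^ 2 + K * (L : ℝ) ^ 2) * (b - a)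
    with hM₀def
  have hL : (0:ℝ) ≤ L := L.2
  have hM₀ : 0 ≤ M₀ := by
    apply add_nonneg
    · exact mul_nonneg (add_nonneg (norm_nonneg _) (mul_nonneg hL hba)) hL
    · exact mul_nonneg (add_nonneg (sq_nonneg _) (mul_nonneg hK (sq_nonneg _))) hba
  have hglip : LipschitzOnWith M₀.toNNReal g (Set.Icc a b) := by
    rw [lipschitzOnWith_iff_dist_le_mul]
    intro s hs t ht
    rw [Real.dist_eq, Real.dist_eq, Real.coe_toNNReal _ hM₀]
    have hkey := key s hs t ht
    have hip : |⟪η₂ t, η₁ s - η₁ t⟫| ≤ (‖η₂ a‖ + (L : ℝ) * (b - a)) * ((L : ℝ) * |s - t|) := by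
      calc |⟪η₂ t, η₁ s - η₁ t⟫| ≤ ‖η₂ t‖ * ‖η₁ s - η₁ t‖ := abs_real_inner_le_norm _ _
        _ ≤ (‖η₂ a‖ + (L : ℝ) * (b - a)) * ((L : ℝ) * |s - t|) := by
            apply mul_le_mul (hR t ht) (hdist1 s hs t ht) (norm_nonneg _)
            exact add_nonneg (norm_nonneg _) (mul_nonneg hL hba)
    have hst : |s - t| ≤ b - a := by
      rw [abs_le]; constructor <;> [linarith [hs.1, hs.2, ht.1, ht.2];
        linarith [hs.1, hs.2, ht.1, ht.2]]
    have hsq2 : (s - t) ^ 2 ≤ (b - a) * |s - t| := by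
      have : (s - t) ^ 2 = |s - t| * |s - t| := by rw [← sq_abs]; ring
      rw [this]
      exact mul_le_mul_of_nonneg_right hst (abs_nonneg _)
    have h1 := (abs_le.1 hkey).1
    have h2 := (abs_le.1 hkey).2
    have h3 := (abs_le.1 hip).1
    have h4 := (abs_le.1 hip).2
    rw [abs_le]
    have hC : (0:ℝ) ≤ (L : ℝ) ^ 2 + K * (L : ℝ) ^ 2 :=
      add_nonneg (sq_nonneg _) (mul_nonneg hK (sq_nonneg _))
    constructor
    · rw [hM₀def]
      nlinarith [mul_le_mul_of_nonneg_left hsq2 hC]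
    · rw [hM₀def]
      nlinarith [mul_le_mul_of_nonneg_left hsq2 hC]
  -- extend g to a Lipschitz function on ℝ
  obtain ⟨G, hGlip, hEq⟩ := hglip.extend_real
  -- a.e. derivative of G on (a,b)
  have hae := hη₁.ae_differentiableWithinAt_of_mem_real
  have hφae : ∀ᵐ t, t ∈ Set.Ioo a b →
      HasDerivAt G (⟪η₂ t, derivWithin η₁ (Set.Icc a b) t⟫) t := by
    filter_upwards [hae] with t hdiff hmem
    have htIcc : t ∈ Set.Icc a b := Set.Ioo_subset_Icc_self hmem
    have hd : DifferentiableWithinAt ℝ η₁ (Set.Icc a b) t := hdiff htIcc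
    have hv : HasDerivWithinAt η₁ (derivWithin η₁ (Set.Icc a b) t) (Set.Icc a b) t :=
      hd.hasDerivWithinAt
    have h1 : HasDerivWithinAt (fun s => ⟪η₂ t, η₁ s⟫)
        (⟪η₂ t, derivWithin η₁ (Set.Icc a b) t⟫) (Set.Icc a b) t := by
      have := HasDerivWithinAt.inner ℝ
        (hasDerivWithinAt_const t (Set.Icc a b) (η₂ t)) hv
      simpa using this
    have he : HasDerivWithinAt (fun s => g s - ⟪η₂ t, η₁ s⟫) 0 (Set.Icc a b) t := by
      apply hasDerivWithinAt_zero_of_sq_bound (C := (L : ℝ) ^ 2 + K * (L : ℝ) ^ 2)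
      intro x hx
      have hk := key x hx t htIcc
      have heq : g x - ⟪η₂ t, η₁ x⟫ - (g t - ⟪η₂ t, η₁ t⟫)
          = g x - g t - ⟪η₂ t, η₁ x - η₁ t⟫ := by
        rw [inner_sub_right]; ring
      rw [heq]
      exact hk
    have hgder : HasDerivWithinAt g (⟪η₂ t, derivWithin η₁ (Set.Icc a b) t⟫)
        (Set.Icc a b) t := by
      have := he.add h1
      have hfe : ((fun s => g s - ⟪η₂ t, η₁ s⟫) + fun s => ⟪η₂ t, η₁ s⟫) = g := by
        funext s; simp
      rw [hfe, zero_add] at this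
      exact this
    have hGder : HasDerivWithinAt G (⟪η₂ t, derivWithin η₁ (Set.Icc a b) t⟫)
        (Set.Icc a b) t :=
      hgder.congr (fun y hy => (hEq hy).symm) (hEq htIcc).symm
    exact hGder.hasDerivAt (Icc_mem_nhds hmem.1 hmem.2)
  have hftc := lipschitz_ftc hGlip hab hφae
  rw [hftc, ← hEq (Set.left_mem_Icc.2 hab), ← hEq (Set.right_mem_Icc.2 hab)]
  simp only [hg, hclosed₁, sub_self]
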